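/- arXiv:1709.09272 — 2 statements merged into one kernel-verified Lean document; each statement's English description precedes it below -/
import Mathlib

section
/- Let G be a topological group, K a symmetric compact subset of G containing the identity, and U an open symmetric neighbourhood of the identity such that N ∩ (K·U·U·K) ⊆ U for a closed normal subgroup N of G. Then H := N ∩ U is an open compact subgroup of N, and moreover t·H·t⁻¹ = H for every t ∈ K. -/
open scoped Pointwise

/-- Let `G` be a topological group, `K` a compact symmetric subset containing the
identity, `U` an open, relatively compact, symmetric neighbourhood of the identity, and
`N` a closed normal subgroup with `N ∩ (K*U*U*K) ⊆ U`.  Then `H := N ∩ U` is the carrier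
of a subgroup of `G` which is compact and open in the subspace topology of `N`, and
`t H t⁻¹ = H` for every `t ∈ K`. -/
theorem inter_open_symmetric_is_open_compact_subgroup
    {G : Type*} [Group G] [TopologicalSpace G] [IsTopologicalGroup G] [T2Space G]
    (K : Set G) (hK : IsCompact K) (hKsymm : K⁻¹ = K) (hKone : (1 : G) ∈ K)
    (U : Set G) (hU : IsOpen U) (hUone : (1 : G) ∈ U) (hUsymm : U⁻¹ = U)
    (hUcpt : IsCompact (closure U))
    (N : Subgroup G) (hNnormal : N.Normal) (hNclosed : IsClosed (N : Set G))
    (hsmall : (N : Set G) ∩ (K * U * U * K) ⊆ U) :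
    ∃ H : Subgroup G, (H : Set G) = (N : Set G) ∩ U ∧
      IsCompact (H : Set G) ∧
      IsOpen ((fun x : N => (x : G)) ⁻¹' (H : Set G)) ∧
      ∀ t ∈ K, (fun x => t * x * t⁻¹) '' (H : Set G) = (H : Set G) := by
  -- membership in the product set
  have hmem : ∀ k ∈ K, ∀ u ∈ U, ∀ v ∈ U, ∀ k' ∈ K, k * u * v * k' ∈ K * U * U * K :=
    fun k hk u hu v hv k' hk' =>
      Set.mul_mem_mul (Set.mul_mem_mul (Set.mul_mem_mul hk hu) hv) hk'
  have hUinv : ∀ u ∈ U, u⁻¹ ∈ U := by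
    intro u hu
    rw [← hUsymm]
    simpa using hu
  have hKinv : ∀ k ∈ K, k⁻¹ ∈ K := by
    intro k hk
    rw [← hKsymm]
    simpa using hk
  -- the key conjugation fact
  have hconj : ∀ t ∈ K, ∀ x, x ∈ (N : Set G) ∩ U → t * x * t⁻¹ ∈ (N : Set G) ∩ U := by
    intro t ht x ⟨hxN, hxU⟩
    refine ⟨hNnormal.conj_mem x hxN t, hsmall ⟨hNnormal.conj_mem x hxN t, ?_⟩⟩
    have := hmem t ht x hxU 1 hUone t⁻¹ (hKinv t ht)
    simpa using this
  -- closure under multiplication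
  have hmulmem : ∀ a ∈ (N : Set G) ∩ U, ∀ b ∈ (N : Set G) ∩ U,
      a * b ∈ (N : Set G) ∩ U := by
    rintro a ⟨haN, haU⟩ b ⟨hbN, hbU⟩
    refine ⟨mul_mem haN hbN, hsmall ⟨mul_mem haN hbN, ?_⟩⟩
    have := hmem 1 hKone a haU b hbU 1 hKone
    simpa using this
  refine ⟨{ carrier := (N : Set G) ∩ U
            mul_mem' := fun {a b} ha hb => hmulmem a ha b hb
            one_mem' := ⟨one_mem N, hUone⟩
            inv_mem' := fun {a} ⟨haN, haU⟩ => ⟨inv_mem haN, hUinv a haU⟩ }, rfl, ?_, ?_, ?_⟩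
  · -- compactness
    have hclU : closure U ⊆ U * U := by
      intro x hx
      rcases mem_closure_iff.mp hx (x • U) (hU.smul x) ⟨1, hUone, mul_one x⟩ with
        ⟨u, ⟨v, hv, hxv⟩, hu⟩
      have hx' : x = u * v⁻¹ := by
        simp only [← hxv, smul_eq_mul, mul_inv_cancel_right]
      rw [hx']
      exact Set.mul_mem_mul hu (hUinv v hv)
    have heq : (N : Set G) ∩ U = (N : Set G) ∩ closure U := by
      apply Set.Subset.antisymm
      · exact Set.inter_subset_inter_right _ subset_closure
      · rintro x ⟨hxN, hxcl⟩
        rcases hclU hxcl with ⟨u, hu, v, hv, rfl⟩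
        refine ⟨hxN, hsmall ⟨hxN, ?_⟩⟩
        have := hmem 1 hKone u hu v hv 1 hKone
        simpa using this
    show IsCompact ((N : Set G) ∩ U)
    rw [heq]
    exact hUcpt.of_isClosed_subset (hNclosed.inter isClosed_closure)
      Set.inter_subset_right
  · -- openness in N
    have : (fun x : N => (x : G)) ⁻¹' ((N : Set G) ∩ U) = (fun x : N => (x : G)) ⁻¹' U := by
      ext x
      simp [x.2]
    show IsOpen ((fun x : N => (x : G)) ⁻¹' ((N : Set G) ∩ U))
    rw [this]
    exact hU.preimage continuous_subtype_val
  · -- conjugation invariance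
    intro t ht
    apply Set.Subset.antisymm
    · rintro _ ⟨x, hx, rfl⟩
      exact hconj t ht x hx
    · intro x hx
      refine ⟨t⁻¹ * x * t, ?_, ?_⟩
      · have := hconj t⁻¹ (hKinv t ht) x hx
        exact (by simpa using this : t⁻¹ * x * t ∈ (N : Set G) ∩ U)
      · group
end

section
/- Let G be a locally compact group, and suppose L¹(G) admits a central bounded approximate identity, i.e., a bounded net {e_α} in L¹(G) such that ‖e_α * f − f‖₁ → 0 for all f ∈ L¹(G) and τ₁(s)e_α = e_α for every s ∈ G and every α, where (τ₁(s)g)(t) = g(s⁻¹ts)Δ(s). Then G is unimodular: Δ(s) = 1 for all s ∈ G. -/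
open MeasureTheory
open scoped ENNReal

private lemma conj_preimage_measure' {G : Type*} [Group G] [TopologicalSpace G]
    [IsTopologicalGroup G] [MeasurableSpace G] [BorelSpace G]
    (μ : Measure G) [μ.IsMulLeftInvariant]
    (s : G) (d : ℝ)
    (hΔ : ∀ E : Set G, MeasurableSet E →
      μ ((fun x => x * s) '' E) = ENNReal.ofReal d * μ E)
    {B : Set G} (hB : MeasurableSet B) :
    μ ((fun y => s * y * s⁻¹) ⁻¹' B) = ENNReal.ofReal d * μ B := by
  have hset : (fun y => s * y * s⁻¹) ⁻¹' B = (fun x => x * s) '' ((fun c => s * c) ⁻¹' B) := by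
    ext y
    constructor
    · intro hy
      refine ⟨y * s⁻¹, ?_, by group⟩
      show s * (y * s⁻¹) ∈ B
      rwa [← mul_assoc]
    · rintro ⟨c, hc, rfl⟩
      have h1 : s * (c * s) * s⁻¹ = s * c := by group
      show s * (c * s) * s⁻¹ ∈ B
      rwa [h1]
  rw [hset, hΔ _ (hB.preimage (measurable_const_mul s)), measure_preimage_mul]

private lemma conj_preimage_null' {G : Type*} [Group G] [TopologicalSpace G]
    [IsTopologicalGroup G] [MeasurableSpace G] [BorelSpace G]
    (μ : Measure G) [μ.IsMulLeftInvariant]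
    (s : G) (d : ℝ)
    (hΔ : ∀ E : Set G, MeasurableSet E →
      μ ((fun x => x * s) '' E) = ENNReal.ofReal d * μ E)
    {N : Set G} (hN : μ N = 0) :
    μ ((fun y => s * y * s⁻¹) ⁻¹' N) = 0 := by
  obtain ⟨B, hNB, hBm, hB0⟩ := exists_measurable_superset_of_null hN
  have hle : μ ((fun y => s * y * s⁻¹) ⁻¹' N) ≤ μ ((fun y => s * y * s⁻¹) ⁻¹' B) :=
    measure_mono (Set.preimage_mono hNB)
  rw [conj_preimage_measure' μ s d hΔ hBm, hB0, mul_zero] at hle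
  exact le_antisymm hle zero_le

private lemma ae_zero_of_conj_scale' {G : Type*} [Group G] [TopologicalSpace G]
    [IsTopologicalGroup G] [MeasurableSpace G] [BorelSpace G]
    (μ : Measure G) [μ.IsMulLeftInvariant]
    (s : G) (d : ℝ) (hd : 1 < d)
    (hΔ : ∀ E : Set G, MeasurableSet E →
      μ ((fun x => x * s) '' E) = ENNReal.ofReal d * μ E)
    (g : G → ℝ) (hg : Integrable g μ)
    (hcg : ∀ y, g (s * y * s⁻¹) = d * g y) :
    g =ᵐ[μ] 0 := by
  have hd0 : (0:ℝ) < d := lt_trans one_pos hd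
  set g' := hg.1.mk g with hg'def
  have hgg' : g =ᵐ[μ] g' := hg.1.ae_eq_mk
  have hg'm : Measurable g' := hg.1.stronglyMeasurable_mk.measurable
  -- a.e. conjugation identity for g'
  have hae : ∀ᵐ y ∂μ, g' (s * y * s⁻¹) = d * g' y := by
    have hN0 : μ {x | g x ≠ g' x} = 0 := by
      have h := hgg'
      rw [Filter.EventuallyEq, ae_iff] at h
      exact h
    have hpre0 : μ ((fun y => s * y * s⁻¹) ⁻¹' {x | g x ≠ g' x}) = 0 :=
      conj_preimage_null' μ s d hΔ hN0
    have hsub : {y | ¬ g' (s * y * s⁻¹) = d * g' y} ⊆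
        {x | g x ≠ g' x} ∪ ((fun y => s * y * s⁻¹) ⁻¹' {x | g x ≠ g' x}) := by
      intro y hy
      by_contra hmem
      simp only [Set.mem_union, Set.mem_setOf_eq, Set.mem_preimage, not_or, not_not] at hmem
      exact hy (by rw [← hmem.2, hcg y, hmem.1])
    rw [ae_iff]
    exact measure_mono_null hsub (measure_union_null hN0 hpre0)
  -- the finite lintegral
  set I := ∫⁻ x, ENNReal.ofReal |g' x| ∂μ with hI
  have hIfin : I < ⊤ := by
    have heq : I = ∫⁻ x, ENNReal.ofReal |g x| ∂μ := by
      apply lintegral_congr_ae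
      filter_upwards [hgg'] with x hx
      rw [hx]
    rw [heq]
    have h2 := hg.2
    rw [HasFiniteIntegral] at h2
    have heq2 : ∫⁻ x, ENNReal.ofReal |g x| ∂μ = ∫⁻ a, ↑‖g a‖₊ ∂μ := by
      apply lintegral_congr
      intro x
      rw [← Real.norm_eq_abs]
      exact ofReal_norm (g x)
    rw [heq2]
    exact h2
  -- superlevel annuli are null
  have hc0 : ∀ c : ℝ, 0 < c → μ {x | c / d < |g' x| ∧ |g' x| ≤ c} = 0 := by
    intro c hcpos
    set T : ℕ → Set G := fun n => {x | c / d ^ (n+1) < |g' x| ∧ |g' x| ≤ c / d ^ n} with hT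
    have hTm : ∀ n, MeasurableSet (T n) :=
      fun n => (measurableSet_lt measurable_const hg'm.abs).inter
        (measurableSet_le hg'm.abs measurable_const)
    -- disjointness
    have hdis : ∀ {n m : ℕ}, n < m → ∀ x, x ∈ T n → x ∈ T m → False := by
      intro n m hnm x hxn hxm
      have h1 : c / d ^ m ≤ c / d ^ (n+1) :=
        div_le_div_of_nonneg_left hcpos.le (pow_pos hd0 _) (pow_le_pow_right₀ hd.le hnm)
      have h2 := hxn.1
      have h3 := hxm.2
      linarith
    -- the key real equivalence
    have hann : ∀ (u : ℝ) (n : ℕ),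
        (c / d ^ (n+1) < d * u ∧ d * u ≤ c / d ^ n) ↔
        (c / d ^ (n+1+1) < u ∧ u ≤ c / d ^ (n+1)) := by
      intro u n
      have hdne : d ≠ 0 := hd0.ne'
      have e1 : c / d ^ (n+1) = d * (c / d ^ (n+1+1)) := by
        field_simp
        ring
      have e2 : c / d ^ n = d * (c / d ^ (n+1)) := by
        field_simp
        ring
      have i1 : c / d ^ (n+1) < d * u ↔ c / d ^ (n+1+1) < u := by
        rw [e1, mul_lt_mul_iff_right₀ hd0]
      have i2 : d * u ≤ c / d ^ n ↔ u ≤ c / d ^ (n+1) := by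
        rw [e2, mul_le_mul_iff_right₀ hd0]
      rw [i1, i2]
    -- conjugation shifts annuli
    have hpre : ∀ n, μ ((fun y => s * y * s⁻¹) ⁻¹' (T n)) = μ (T (n+1)) := by
      intro n
      apply measure_congr
      rw [Filter.eventuallyEq_set]
      filter_upwards [hae] with y hy
      simp only [Set.mem_preimage, hT, Set.mem_setOf_eq, hy]
      have habs : |d * g' y| = d * |g' y| := by rw [abs_mul, abs_of_pos hd0]
      rw [habs]
      exact hann |g' y| n
    -- measure recursion
    have hμT : ∀ n, μ (T n) = (ENNReal.ofReal d) ^ n * μ (T 0) := by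
      intro n
      induction n with
      | zero => simp
      | succ k ih =>
        rw [← hpre k, conj_preimage_measure' μ s d hΔ (hTm k), ih, pow_succ]
        ring
    -- each annulus contributes the same amount
    have hterm : ∀ n : ℕ, ENNReal.ofReal (c / d ^ (n+1)) * μ (T n)
        = ENNReal.ofReal (c / d) * μ (T 0) := by
      intro n
      rw [hμT n, ← mul_assoc, ← ENNReal.ofReal_pow hd0.le,
        ← ENNReal.ofReal_mul (by positivity)]
      congr 2
      have hdne : d ≠ 0 := hd0.ne'
      rw [pow_succ]
      field_simp
    -- sum bound
    have hNle : ∀ N : ℕ, (N : ℝ≥0∞) * (ENNReal.ofReal (c / d) * μ (T 0)) ≤ I := by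
      intro N
      have hpt : ∀ x, (∑ n ∈ Finset.range N,
          (T n).indicator (fun _ => ENNReal.ofReal (c / d ^ (n+1))) x)
          ≤ ENNReal.ofReal |g' x| := by
        intro x
        by_cases hx : ∃ m ∈ Finset.range N, x ∈ T m
        · obtain ⟨m, hmN, hxm⟩ := hx
          rw [Finset.sum_eq_single_of_mem m hmN]
          · rw [Set.indicator_of_mem hxm]
            exact ENNReal.ofReal_le_ofReal hxm.1.le
          · intro n hn hne
            rw [Set.indicator_of_notMem]
            intro hxn
            rcases hne.lt_or_gt with h | h
            · exact hdis h x hxn hxm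
            · exact hdis h x hxm hxn
        · rw [Finset.sum_eq_zero]
          · exact zero_le
          · intro n hn
            exact Set.indicator_of_notMem (fun h => hx ⟨n, hn, h⟩) _
      have hsum : ∫⁻ x, (∑ n ∈ Finset.range N,
          (T n).indicator (fun _ => ENNReal.ofReal (c / d ^ (n+1))) x) ∂μ
          = ∑ n ∈ Finset.range N, ENNReal.ofReal (c / d ^ (n+1)) * μ (T n) := by
        rw [lintegral_finset_sum]
        · congr 1
          ext n
          rw [lintegral_indicator (hTm n), setLIntegral_const]
        · intro n hn
          exact (measurable_const.indicator (hTm n))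
      calc (N : ℝ≥0∞) * (ENNReal.ofReal (c / d) * μ (T 0))
          = ∑ n ∈ Finset.range N, ENNReal.ofReal (c / d ^ (n+1)) * μ (T n) := by
            simp only [hterm]
            rw [Finset.sum_const, Finset.card_range, nsmul_eq_mul]
        _ = ∫⁻ x, (∑ n ∈ Finset.range N,
              (T n).indicator (fun _ => ENNReal.ofReal (c / d ^ (n+1))) x) ∂μ := hsum.symm
        _ ≤ I := lintegral_mono hpt
    -- conclude μ (T 0) = 0
    have hz : ENNReal.ofReal (c / d) * μ (T 0) = 0 := by
      by_contra ha
      have hfin : I / (ENNReal.ofReal (c / d) * μ (T 0)) ≠ ⊤ :=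
        (ENNReal.div_lt_top hIfin.ne ha).ne
      obtain ⟨N, hN⟩ := ENNReal.exists_nat_gt hfin
      have : (N : ℝ≥0∞) ≤ I / (ENNReal.ofReal (c / d) * μ (T 0)) :=
        (ENNReal.le_div_iff_mul_le (Or.inl ha) (Or.inr hIfin.ne)).2 (hNle N)
      exact absurd hN (not_lt.2 this)
    have hcd : ENNReal.ofReal (c / d) ≠ 0 := by
      simp only [ne_eq, ENNReal.ofReal_eq_zero, not_le]
      positivity
    have hz2 := (mul_eq_zero.1 hz).resolve_left hcd
    have hT0 : {x | c / d < |g' x| ∧ |g' x| ≤ c} = T 0 := by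
      rw [hT]
      ext x
      norm_num
    rw [hT0]
    exact hz2
  -- conclude g' = 0 a.e.
  have hg'0 : μ {x | g' x ≠ 0} = 0 := by
    have hsub : {x | g' x ≠ 0} ⊆
        ⋃ k : ℤ, {x | d ^ k < |g' x| ∧ |g' x| ≤ d ^ (k+1)} := by
      intro x hx
      obtain ⟨k, hk⟩ := exists_mem_Ioc_zpow (abs_pos.2 hx) hd
      exact Set.mem_iUnion.2 ⟨k, hk.1, hk.2⟩
    refine measure_mono_null hsub (measure_iUnion_null ?_)
    intro k
    have hck : (0:ℝ) < d ^ (k+1) := zpow_pos hd0 _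
    have h := hc0 (d ^ (k+1)) hck
    have heq : d ^ (k+1) / d = d ^ k := by
      rw [zpow_add_one₀ hd0.ne']
      field_simp
    rw [heq] at h
    exact h
  have hg'ae : g' =ᵐ[μ] 0 := by
    rw [Filter.EventuallyEq, ae_iff]
    simpa using hg'0
  exact hgg'.trans hg'ae

/-- If the group algebra `L¹(G)` of a locally compact group admits a central bounded
approximate identity `{e_α}` (i.e. `‖e_α * f − f‖₁ → 0` for all `f ∈ L¹(G)` and
`τ₁(s)e_α = e_α` for all `s`, where `(τ₁(s)g)(t) = g(s⁻¹ts)Δ(s)`), then `G` is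
unimodular: `Δ ≡ 1`. -/
theorem unimodular_of_central_bai
    {G : Type*} [Group G] [TopologicalSpace G] [IsTopologicalGroup G]
    [LocallyCompactSpace G] [T2Space G] [MeasurableSpace G] [BorelSpace G]
    (μ : Measure G) [μ.IsHaarMeasure]
    (Δ : G → ℝ) (hΔpos : ∀ s, 0 < Δ s)
    (hΔ : ∀ (s : G) (E : Set G), MeasurableSet E →
      μ ((fun x => x * s) '' E) = ENNReal.ofReal (Δ s) * μ E)
    {ι : Type*} (l : Filter ι) [l.NeBot] (e : ι → G → ℝ)
    (heint : ∀ α, Integrable (e α) μ)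
    (C : ℝ) (hebdd : ∀ α, (∫ x, |e α x| ∂μ) ≤ C)
    (hbai : ∀ f : G → ℝ, Integrable f μ →
      Filter.Tendsto
        (fun α => ∫ x, |(∫ y, e α y * f (y⁻¹ * x) ∂μ) - f x| ∂μ) l (nhds 0))
    (hcentral : ∀ (s : G) (α : ι) (x : G), e α (s⁻¹ * x * s) * Δ s = e α x) :
    ∀ s : G, Δ s = 1 := by
  -- a compact neighborhood of 1 with positive finite measure
  obtain ⟨K, hKc, hKn⟩ := exists_compact_mem_nhds (1 : G)
  have hKm : MeasurableSet K := hKc.measurableSet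
  have hKpos : 0 < μ K := Measure.measure_pos_of_mem_nhds μ hKn
  have hKfin : μ K < ⊤ := hKc.measure_lt_top
  -- no element has Δ > 1
  have key : ∀ s : G, 1 < Δ s → False := by
    intro s hs
    have hez : ∀ α, e α =ᵐ[μ] 0 := by
      intro α
      refine ae_zero_of_conj_scale' μ s (Δ s) hs (hΔ s) (e α) (heint α) ?_
      intro y
      have h := hcentral s α (s * y * s⁻¹)
      have h2 : s⁻¹ * (s * y * s⁻¹) * s = y := by group
      rw [h2] at h
      rw [← h]
      ring
    -- get a contradiction with the approximate identity property
    set f : G → ℝ := K.indicator (fun _ => (1:ℝ)) with hf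
    have hfint : Integrable f μ := by
      rw [hf, integrable_indicator_iff hKm]
      exact integrableOn_const (hs := hKfin.ne)
    have htendsto := hbai f hfint
    have hconst : ∀ α, (∫ x, |(∫ y, e α y * f (y⁻¹ * x) ∂μ) - f x| ∂μ)
        = (μ K).toReal := by
      intro α
      have hzero : ∀ x : G, (∫ y, e α y * f (y⁻¹ * x) ∂μ) = 0 := by
        intro x
        apply integral_eq_zero_of_ae
        filter_upwards [hez α] with y hy
        rw [hy]
        simp
      have : (fun x => |(∫ y, e α y * f (y⁻¹ * x) ∂μ) - f x|) = fun x => |f x| := by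
        funext x
        rw [hzero x, zero_sub, abs_neg]
      rw [this]
      have habs : (fun x => |f x|) = f := by
        funext x
        rw [hf]
        by_cases hx : x ∈ K
        · simp [Set.indicator_of_mem hx]
        · simp [Set.indicator_of_notMem hx]
      rw [habs, hf, integral_indicator_const _ hKm]
      simp [Measure.real]
    have h0 : (μ K).toReal = 0 := by
      have h1 : Filter.Tendsto (fun _ : ι => (μ K).toReal) l (nhds ((μ K).toReal)) :=
        tendsto_const_nhds
      have h2 : Filter.Tendsto (fun _ : ι => (μ K).toReal) l (nhds 0) := by
        convert htendsto using 1
        funext α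
        exact (hconst α).symm
      exact tendsto_nhds_unique h1 h2
    rw [ENNReal.toReal_eq_zero_iff] at h0
    rcases h0 with h | h
    · exact absurd h hKpos.ne'
    · exact absurd h hKfin.ne
  -- Δ(s⁻¹) * Δ(s) = 1
  have hprod : ∀ s : G, Δ s⁻¹ * Δ s = 1 := by
    intro s
    have hE : MeasurableSet ((fun x => x * s) '' K) := by
      have : (fun x => x * s) '' K = (fun x => x * s⁻¹) ⁻¹' K := by
        ext x
        constructor
        · rintro ⟨a, ha, rfl⟩
          simpa using ha
        · intro hx
          exact ⟨x * s⁻¹, hx, by group⟩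
      rw [this]
      exact hKm.preimage (measurable_mul_const s⁻¹)
    have h1 := hΔ s⁻¹ _ hE
    have h2 := hΔ s K hKm
    have himg : (fun x => x * s⁻¹) '' ((fun x => x * s) '' K) = K := by
      rw [← Set.image_comp]
      have : ((fun x => x * s⁻¹) ∘ fun x => x * s) = id := by
        funext x
        simp [Function.comp, mul_assoc]
      rw [this, Set.image_id]
    rw [himg, h2, ← mul_assoc] at h1
    have hmul : ENNReal.ofReal (Δ s⁻¹) * ENNReal.ofReal (Δ s)
        = ENNReal.ofReal (Δ s⁻¹ * Δ s) :=
      (ENNReal.ofReal_mul (hΔpos s⁻¹).le).symm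
    rw [hmul] at h1
    have h3 : ENNReal.ofReal (Δ s⁻¹ * Δ s) = 1 := by
      apply (ENNReal.mul_left_inj hKpos.ne' hKfin.ne).1
      rw [one_mul, ← h1]
    have h4 : (0:ℝ) ≤ Δ s⁻¹ * Δ s := (mul_pos (hΔpos s⁻¹) (hΔpos s)).le
    rw [← ENNReal.ofReal_one, ENNReal.ofReal_eq_ofReal_iff h4 zero_le_one] at h3
    exact h3
  -- finish
  intro s
  by_contra hne
  rcases Ne.lt_or_gt hne with h | h
  · have h1 : 1 < Δ s⁻¹ := by
      have hp := hprod s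
      have := hΔpos s
      nlinarith [hΔpos s⁻¹]
    exact key s⁻¹ h1
  · exact key s h
end
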